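/- Let H^• = (H,•,1,Δ,ε) be a bialgebra, and suppose H carries a second associative unital product · with the same unit 1, such that there is a linear map S: H→H with S(a₁)·a₂ = ε(a)1 = a₁·S(a₂), and the Hopf brace compatibility a•(b·c) = (a₁•b)·S(a₂)·(a₃•c) holds. Then a⇀b := S(a₁)·(a₂•b) defines a left action of the monoid (H,•) on H, and (H,·,1) is a left H^•-module algebra for this action: a⇀(b·c) = (a₁⇀b)·(a₂⇀c) and a⇀1 = ε(a)1. -/

import Mathlib

open TensorProduct

noncomputable section

variable (k H : Type*) [Field k] [Ring H] [Bialgebra k H]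

/-- Multiplication of `H` as a linear map. -/
def mu : H ⊗[k] H →ₗ[k] H := LinearMap.mul' k H
/-- Comultiplication. -/
def delta : H →ₗ[k] H ⊗[k] H := Coalgebra.comul
/-- Counit. -/
def eps : H →ₗ[k] k := Coalgebra.counit
/-- Flip `a⊗b ↦ b⊗a`. -/
def tau : H ⊗[k] H →ₗ[k] H ⊗[k] H := (TensorProduct.comm k H H).toLinearMap
/-- Associator. -/
def assocMap : (H ⊗[k] H) ⊗[k] H →ₗ[k] H ⊗[k] (H ⊗[k] H) :=
  (TensorProduct.assoc k H H H).toLinearMap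
/-- Inverse associator. -/
def assocInv : H ⊗[k] (H ⊗[k] H) →ₗ[k] (H ⊗[k] H) ⊗[k] H :=
  (TensorProduct.assoc k H H H).symm.toLinearMap
/-- The middle-four interchange `(a⊗b)⊗(c⊗d) ↦ (a⊗c)⊗(b⊗d)`. -/
def ttcMap : (H ⊗[k] H) ⊗[k] (H ⊗[k] H) →ₗ[k] (H ⊗[k] H) ⊗[k] (H ⊗[k] H) :=
  (TensorProduct.tensorTensorTensorComm k H H H H).toLinearMap
/-- `a⊗b ↦ (a₁⊗b₁)⊗(a₂⊗b₂)` (Sweedler notation). -/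
def dd : H ⊗[k] H →ₗ[k] (H ⊗[k] H) ⊗[k] (H ⊗[k] H) :=
  ttcMap k H ∘ₗ map (delta k H) (delta k H)
/-- `a⊗b ↦ ((a₁⊗b₁)⊗(a₂⊗b₂))⊗(a₃⊗b₃)`. -/
def ddd : H ⊗[k] H →ₗ[k] ((H ⊗[k] H) ⊗[k] (H ⊗[k] H)) ⊗[k] (H ⊗[k] H) :=
  map (dd k H) LinearMap.id ∘ₗ dd k H
/-- `a⊗b ↦ ε(a)ε(b)`. -/
def epseps : H ⊗[k] H →ₗ[k] k := LinearMap.mul' k k ∘ₗ map (eps k H) (eps k H)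
/-- `σ(a⊗b) = (a₁⇀b₁)⊗(a₂↼b₂)` attached to a pair of "actions". -/
def sig (l r : H ⊗[k] H →ₗ[k] H) : H ⊗[k] H →ₗ[k] H ⊗[k] H :=
  map l r ∘ₗ dd k H


/-- `a ↦ (a₁⊗a₂)⊗a₃`. -/
def delta3 : H →ₗ[k] (H ⊗[k] H) ⊗[k] H :=
  map (delta k H) LinearMap.id ∘ₗ delta k H
section Helpers
variable {k : Type*} [Field k]
variable {M N P Q W : Type*} [AddCommMonoid M] [AddCommMonoid N] [AddCommMonoid P]
  [AddCommMonoid Q] [AddCommMonoid W] [Module k M] [Module k N] [Module k P] [Module k Q]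
  [Module k W]

/-- induction for threefold tensors -/
lemma ind3 {motive : (M ⊗[k] N) ⊗[k] P → Prop} (t : (M ⊗[k] N) ⊗[k] P)
    (zero : motive 0)
    (tmul : ∀ x y z, motive ((x ⊗ₜ[k] y) ⊗ₜ[k] z))
    (add : ∀ s t, motive s → motive t → motive (s + t)) : motive t := by
  induction t using TensorProduct.induction_on with
  | zero => exact zero
  | tmul p z =>
    induction p using TensorProduct.induction_on with
    | zero => simpa using zero
    | tmul x y => exact tmul x y z
    | add s t hs ht => simpa [add_tmul] using add _ _ hs ht
  | add s t hs ht => exact add s t hs ht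

lemma ext4r {F G : M ⊗[k] ((N ⊗[k] P) ⊗[k] Q) →ₗ[k] W}
    (h : ∀ x y z w, F (x ⊗ₜ[k] ((y ⊗ₜ[k] z) ⊗ₜ[k] w)) = G (x ⊗ₜ[k] ((y ⊗ₜ[k] z) ⊗ₜ[k] w))) :
    F = G := by
  apply TensorProduct.ext'
  intro x p
  induction p using ind3 with
  | zero => simp
  | tmul y z w => exact h x y z w
  | add s t hs ht => simp [tmul_add, hs, ht]

lemma ext6 {F G : ((M ⊗[k] N) ⊗[k] P) ⊗[k] ((M ⊗[k] N) ⊗[k] P) →ₗ[k] W}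
    (h : ∀ x y z u v w, F (((x ⊗ₜ[k] y) ⊗ₜ[k] z) ⊗ₜ[k] ((u ⊗ₜ[k] v) ⊗ₜ[k] w))
       = G (((x ⊗ₜ[k] y) ⊗ₜ[k] z) ⊗ₜ[k] ((u ⊗ₜ[k] v) ⊗ₜ[k] w))) : F = G := by
  apply TensorProduct.ext'
  intro p q
  induction p using ind3 with
  | zero => simp
  | tmul x y z =>
    induction q using ind3 with
    | zero => simp
    | tmul u v w => exact h x y z u v w
    | add s t hs ht => simp [tmul_add, hs, ht]
  | add s t hs ht => simp [add_tmul, hs, ht]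

/-- Fin-indexed representation of a tensor. -/
lemma exists_fin2 (t : M ⊗[k] N) :
    ∃ (n : ℕ) (x : Fin n → M) (y : Fin n → N), t = ∑ i, x i ⊗ₜ[k] y i := by
  obtain ⟨s, hs⟩ := TensorProduct.exists_finset t
  refine ⟨s.card, (fun i => (s.equivFin.symm i).1.1), (fun i => (s.equivFin.symm i).1.2), ?_⟩
  rw [hs, ← Finset.sum_attach s (fun i => i.1 ⊗ₜ[k] i.2)]
  exact (Equiv.sum_comp s.equivFin.symm _).symm

lemma exists_fin3 (t : (M ⊗[k] N) ⊗[k] P) :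
    ∃ (n : ℕ) (x : Fin n → M) (y : Fin n → N) (z : Fin n → P),
      t = ∑ i, (x i ⊗ₜ[k] y i) ⊗ₜ[k] z i := by
  induction t using ind3 with
  | zero => exact ⟨0, Fin.elim0, Fin.elim0, Fin.elim0, by simp⟩
  | tmul x y z => exact ⟨1, fun _ => x, fun _ => y, fun _ => z, by simp⟩
  | add s t hs ht =>
    obtain ⟨n₁, x₁, y₁, z₁, h₁⟩ := hs
    obtain ⟨n₂, x₂, y₂, z₂, h₂⟩ := ht
    refine ⟨n₁ + n₂, Fin.append x₁ x₂, Fin.append y₁ y₂, Fin.append z₁ z₂, ?_⟩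
    rw [Fin.sum_univ_add]
    simp [h₁, h₂]

end Helpers

section Part2
variable (k H : Type*) [Field k] [Ring H] [Bialgebra k H]

def rho1 : ((H ⊗[k] H) ⊗[k] H) ⊗[k] H →ₗ[k] H ⊗[k] (H ⊗[k] (H ⊗[k] H)) :=
  (TensorProduct.assoc k H H (H ⊗[k] H)).toLinearMap ∘ₗ
    (TensorProduct.assoc k (H ⊗[k] H) H H).toLinearMap

def rho2 : H ⊗[k] ((H ⊗[k] H) ⊗[k] H) →ₗ[k] H ⊗[k] (H ⊗[k] (H ⊗[k] H)) :=
  map LinearMap.id (TensorProduct.assoc k H H H).toLinearMap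

def Emap : H →ₗ[k] H ⊗[k] (H ⊗[k] (H ⊗[k] H)) :=
  (TensorProduct.assoc k H H (H ⊗[k] H)).toLinearMap ∘ₗ map (delta k H) (delta k H) ∘ₗ delta k H

@[simp] lemma rho1_apply (x y z w : H) :
    rho1 k H (((x ⊗ₜ[k] y) ⊗ₜ[k] z) ⊗ₜ[k] w) = x ⊗ₜ[k] (y ⊗ₜ[k] (z ⊗ₜ[k] w)) := rfl

@[simp] lemma rho2_apply (x y z w : H) :
    rho2 k H (x ⊗ₜ[k] ((y ⊗ₜ[k] z) ⊗ₜ[k] w)) = x ⊗ₜ[k] (y ⊗ₜ[k] (z ⊗ₜ[k] w)) := rfl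

lemma coassoc_map :
    (TensorProduct.assoc k H H H).toLinearMap ∘ₗ map (delta k H) LinearMap.id ∘ₗ delta k H
      = map LinearMap.id (delta k H) ∘ₗ delta k H :=
  Coalgebra.coassoc (R := k) (A := H)

variable {k H}

lemma mapid_comp {M N P W : Type*} [AddCommMonoid M] [AddCommMonoid N] [AddCommMonoid P]
    [AddCommMonoid W] [Module k M] [Module k N] [Module k P] [Module k W]
    (f : N →ₗ[k] P) (g : M →ₗ[k] N) :
    (map LinearMap.id (f ∘ₗ g) : W ⊗[k] M →ₗ[k] W ⊗[k] P)
      = map LinearMap.id f ∘ₗ map LinearMap.id g := by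
  rw [← TensorProduct.map_comp]; simp

lemma mapid_comp' {M N P W : Type*} [AddCommMonoid M] [AddCommMonoid N] [AddCommMonoid P]
    [AddCommMonoid W] [Module k M] [Module k N] [Module k P] [Module k W]
    (f : N →ₗ[k] P) (g : M →ₗ[k] N) :
    (map (f ∘ₗ g) LinearMap.id : M ⊗[k] W →ₗ[k] P ⊗[k] W)
      = map f LinearMap.id ∘ₗ map g LinearMap.id := by
  rw [← TensorProduct.map_comp]; simp

lemma map_split' {M N P Q : Type*} [AddCommMonoid M] [AddCommMonoid N] [AddCommMonoid P]
    [AddCommMonoid Q] [Module k M] [Module k N] [Module k P] [Module k Q]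
    (f : M →ₗ[k] N) (g : P →ₗ[k] Q) :
    map f g = map f LinearMap.id ∘ₗ map LinearMap.id g := by
  rw [← TensorProduct.map_comp]; simp

lemma map_split {M N P Q : Type*} [AddCommMonoid M] [AddCommMonoid N] [AddCommMonoid P]
    [AddCommMonoid Q] [Module k M] [Module k N] [Module k P] [Module k Q]
    (f : M →ₗ[k] N) (g : P →ₗ[k] Q) :
    map f g = map LinearMap.id g ∘ₗ map f LinearMap.id := by
  rw [← TensorProduct.map_comp]; simp

variable (k H)

lemma nat1 (f : H →ₗ[k] H ⊗[k] H) :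
    (TensorProduct.assoc k H H (H ⊗[k] H)).toLinearMap ∘ₗ map LinearMap.id f
      = map LinearMap.id (map LinearMap.id f) ∘ₗ (TensorProduct.assoc k H H H).toLinearMap := by
  apply TensorProduct.ext_threefold; intro x y z; simp

lemma nat2 (f : H →ₗ[k] H ⊗[k] H) :
    (TensorProduct.assoc k (H ⊗[k] H) H H).toLinearMap ∘ₗ map (map f LinearMap.id) LinearMap.id
      = map f LinearMap.id ∘ₗ (TensorProduct.assoc k H H H).toLinearMap := by
  apply TensorProduct.ext_threefold; intro x y z; simp

lemma E1 : Emap k H =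
    map LinearMap.id (map LinearMap.id (delta k H)) ∘ₗ map LinearMap.id (delta k H)
      ∘ₗ delta k H := by
  rw [Emap, map_split (delta k H) (delta k H)]
  simp only [← LinearMap.comp_assoc]
  rw [nat1]
  simp only [LinearMap.comp_assoc]
  rw [coassoc_map]

lemma E3 : Emap k H = rho2 k H ∘ₗ map LinearMap.id (delta3 k H) ∘ₗ delta k H := by
  have h : rho2 k H ∘ₗ map LinearMap.id (delta3 k H)
      = map LinearMap.id ((TensorProduct.assoc k H H H).toLinearMap ∘ₗ delta3 k H) := by
    rw [rho2, mapid_comp]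
  have h2 : (TensorProduct.assoc k H H H).toLinearMap ∘ₗ delta3 k H
      = map LinearMap.id (delta k H) ∘ₗ delta k H := by
    rw [delta3, ← coassoc_map]
  simp only [← LinearMap.comp_assoc]
  rw [h, h2, mapid_comp]
  simp only [LinearMap.comp_assoc]
  rw [← E1]

lemma E2 : Emap k H = rho1 k H ∘ₗ map (delta3 k H) LinearMap.id ∘ₗ delta k H := by
  have h : map (delta3 k H) (LinearMap.id : H →ₗ[k] H)
      = map (map (delta k H) LinearMap.id) LinearMap.id ∘ₗ map (delta k H) LinearMap.id := by
    rw [delta3, mapid_comp']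
  rw [rho1, h]
  simp only [← LinearMap.comp_assoc]
  rw [LinearMap.comp_assoc (map (map (delta k H) LinearMap.id) LinearMap.id)
    (TensorProduct.assoc k (H ⊗[k] H) H H).toLinearMap
    (TensorProduct.assoc k H H (H ⊗[k] H)).toLinearMap, nat2]
  simp only [LinearMap.comp_assoc]
  rw [coassoc_map, Emap, map_split' (delta k H) (delta k H)]
  simp only [LinearMap.comp_assoc]

end Part2

section Part3
variable {k H : Type*} [Field k] [Ring H] [Bialgebra k H]
variable (cd : H ⊗[k] H →ₗ[k] H) (S : H →ₗ[k] H)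

/-- `((x⊗y)⊗z) ↦ cd(cd(f2 x ⊗ S y) ⊗ f4 z)` -/
def PsiG (f2 f4 : H →ₗ[k] H) : (H ⊗[k] H) ⊗[k] H →ₗ[k] H :=
  cd ∘ₗ map cd LinearMap.id ∘ₗ map (map f2 S) f4

@[simp] lemma PsiG_apply (f2 f4 : H →ₗ[k] H) (x y z : H) :
    PsiG cd S f2 f4 ((x ⊗ₜ[k] y) ⊗ₜ[k] z) = cd (cd (f2 x ⊗ₜ[k] S y) ⊗ₜ[k] f4 z) := rfl

/-- `x⊗(y⊗(z⊗w)) ↦ cd(cd(cd(S x ⊗ f2 y) ⊗ S z) ⊗ f4 w)` -/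
def G4 (f2 f4 : H →ₗ[k] H) : H ⊗[k] (H ⊗[k] (H ⊗[k] H)) →ₗ[k] H :=
  cd ∘ₗ map cd LinearMap.id ∘ₗ map (map cd LinearMap.id) LinearMap.id ∘ₗ
    map (map (map S f2) S) f4 ∘ₗ
    (TensorProduct.assoc k (H ⊗[k] H) H H).symm.toLinearMap ∘ₗ
    (TensorProduct.assoc k H H (H ⊗[k] H)).symm.toLinearMap

@[simp] lemma G4_apply (f2 f4 : H →ₗ[k] H) (x y z w : H) :
    G4 cd S f2 f4 (x ⊗ₜ[k] (y ⊗ₜ[k] (z ⊗ₜ[k] w)))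
      = cd (cd (cd (S x ⊗ₜ[k] f2 y) ⊗ₜ[k] S z) ⊗ₜ[k] f4 w) := rfl

/-- `x⊗(y⊗(z⊗w)) ↦ cd(cd(cd(f1 x ⊗ S y) ⊗ f3 z) ⊗ S w)` -/
def G4' (f1 f3 : H →ₗ[k] H) : H ⊗[k] (H ⊗[k] (H ⊗[k] H)) →ₗ[k] H :=
  cd ∘ₗ map cd LinearMap.id ∘ₗ map (map cd LinearMap.id) LinearMap.id ∘ₗ
    map (map (map f1 S) f3) S ∘ₗ
    (TensorProduct.assoc k (H ⊗[k] H) H H).symm.toLinearMap ∘ₗ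
    (TensorProduct.assoc k H H (H ⊗[k] H)).symm.toLinearMap

@[simp] lemma G4'_apply (f1 f3 : H →ₗ[k] H) (x y z w : H) :
    G4' cd S f1 f3 (x ⊗ₜ[k] (y ⊗ₜ[k] (z ⊗ₜ[k] w)))
      = cd (cd (cd (f1 x ⊗ₜ[k] S y) ⊗ₜ[k] f3 z) ⊗ₜ[k] S w) := rfl

/-- `((x⊗y)⊗z)⊗w ↦ cd(cd(S x ⊗ (y * S w)) ⊗ S z)` -/
def Xi : ((H ⊗[k] H) ⊗[k] H) ⊗[k] H →ₗ[k] H :=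
  cd ∘ₗ map cd LinearMap.id ∘ₗ
    ((TensorProduct.assoc k H H H).symm.toLinearMap ∘ₗ
      map LinearMap.id (TensorProduct.comm k H H).toLinearMap ∘ₗ
      (TensorProduct.assoc k H H H).toLinearMap) ∘ₗ
    map (map S S) (mu k H ∘ₗ map LinearMap.id S) ∘ₗ
    ttcMap k H ∘ₗ (TensorProduct.assoc k (H ⊗[k] H) H H).toLinearMap

@[simp] lemma Xi_apply (x y z w : H) :
    Xi cd S (((x ⊗ₜ[k] y) ⊗ₜ[k] z) ⊗ₜ[k] w)
      = cd (cd (S x ⊗ₜ[k] (y * S w)) ⊗ₜ[k] S z) := by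
  simp [Xi, ttcMap, mu, LinearMap.mul'_apply]

/-- `a⊗b ↦ S(a₁)·(a₂•S(b))·S(a₃)` (Sweedler) -/
def Tm : H ⊗[k] H →ₗ[k] H := Xi cd S ∘ₗ map (delta3 k H) LinearMap.id

lemma Tm_flip (v : H) : Tm cd S ∘ₗ (TensorProduct.mk k H H).flip v
    = (Xi cd S ∘ₗ (TensorProduct.mk k ((H ⊗[k] H) ⊗[k] H) H).flip v) ∘ₗ delta3 k H := by
  ext x; simp [Tm]

/-- convolution product on `(H⊗H) → H` w.r.t. the product `cd` -/
def convC (f g : H ⊗[k] H →ₗ[k] H) : H ⊗[k] H →ₗ[k] H := cd ∘ₗ map f g ∘ₗ dd k H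

/-- the convolution unit -/
def uC : H ⊗[k] H →ₗ[k] H := Algebra.linearMap k H ∘ₗ epseps k H

@[simp] lemma uC_apply (x y : H) :
    uC (x ⊗ₜ[k] y) = (eps k H x * eps k H y) • 1 := by
  simp [uC, epseps, Algebra.algebraMap_eq_smul_one]

lemma dd_apply (a b : H) :
    dd k H (a ⊗ₜ[k] b) = ttcMap k H (delta k H a ⊗ₜ[k] delta k H b) := rfl

section WithHyps

lemma cdassoc_map
    (hassoc : ∀ a b c : H, cd (cd (a ⊗ₜ[k] b) ⊗ₜ[k] c) = cd (a ⊗ₜ[k] cd (b ⊗ₜ[k] c))) :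
    cd ∘ₗ map cd LinearMap.id
      = cd ∘ₗ map LinearMap.id cd ∘ₗ (TensorProduct.assoc k H H H).toLinearMap := by
  apply TensorProduct.ext_threefold; intro x y z; simp [hassoc]

lemma lemL (hassoc : ∀ a b c : H, cd (cd (a ⊗ₜ[k] b) ⊗ₜ[k] c) = cd (a ⊗ₜ[k] cd (b ⊗ₜ[k] c))) (f2 f4 : H →ₗ[k] H) :
    cd ∘ₗ map S (PsiG cd S f2 f4) = G4 cd S f2 f4 ∘ₗ rho2 k H := by
  apply ext4r; intro x y z w
  simp only [LinearMap.coe_comp, Function.comp_apply, map_tmul, rho2_apply, PsiG_apply,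
    G4_apply, LinearMap.id_apply]
  rw [← hassoc, ← hassoc]

lemma lemR3 (hassoc : ∀ a b c : H, cd (cd (a ⊗ₜ[k] b) ⊗ₜ[k] c) = cd (a ⊗ₜ[k] cd (b ⊗ₜ[k] c))) (f2 f4 : H →ₗ[k] H) :
    cd ∘ₗ map (cd ∘ₗ map S f2) (cd ∘ₗ map S f4)
      = G4 cd S f2 f4 ∘ₗ (TensorProduct.assoc k H H (H ⊗[k] H)).toLinearMap := by
  apply TensorProduct.ext_fourfold'; intro x y z w
  simp only [LinearMap.coe_comp, Function.comp_apply, map_tmul, G4_apply,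
    LinearEquiv.coe_coe, TensorProduct.assoc_tmul]
  rw [hassoc (cd (S x ⊗ₜ[k] f2 y)) (S z) (f4 w)]

lemma lemR2 (u : H) (f4 : H →ₗ[k] H) :
    cd ∘ₗ map (Xi cd S ∘ₗ (TensorProduct.mk k ((H ⊗[k] H) ⊗[k] H) H).flip u) f4
      = G4 cd S (LinearMap.mulRight k (S u)) f4 ∘ₗ rho1 k H := by
  apply TensorProduct.ext_fourfold; intro x y z w
  simp

lemma lemK1 (hassoc : ∀ a b c : H, cd (cd (a ⊗ₜ[k] b) ⊗ₜ[k] c) = cd (a ⊗ₜ[k] cd (b ⊗ₜ[k] c))) (u v : H) :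
    cd ∘ₗ map (LinearMap.mulRight k u)
        (Xi cd S ∘ₗ (TensorProduct.mk k ((H ⊗[k] H) ⊗[k] H) H).flip v)
      = G4' cd S (LinearMap.mulRight k u) (LinearMap.mulRight k (S v)) ∘ₗ rho2 k H := by
  apply ext4r; intro x y z w
  simp only [LinearMap.coe_comp, Function.comp_apply, map_tmul, rho2_apply, G4'_apply,
    LinearMap.mulRight_apply, LinearMap.flip_apply, TensorProduct.mk_apply, Xi_apply]
  rw [← hassoc, ← hassoc]

end WithHyps
end Part3

section Part4
variable {k H : Type*} [Field k] [Ring H] [Bialgebra k H]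
variable (cd : H ⊗[k] H →ₗ[k] H) (S : H →ₗ[k] H)

lemma Fapp (x y : H) :
    (cd ∘ₗ map S (mu k H) ∘ₗ assocMap k H ∘ₗ map (delta k H) LinearMap.id) (x ⊗ₜ[k] y)
      = cd (map S (LinearMap.mulRight k y) (delta k H x)) := by
  have haux : ∀ t : H ⊗[k] H,
      (map S (mu k H)) (assocMap k H (t ⊗ₜ[k] y)) = map S (LinearMap.mulRight k y) t := by
    intro t
    induction t using TensorProduct.induction_on with
    | zero => simp
    | tmul a b => simp [assocMap, mu, LinearMap.mul'_apply]
    | add s t hs ht => simp [add_tmul, hs, ht]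
  simp only [LinearMap.coe_comp, Function.comp_apply, map_tmul, LinearMap.id_apply]
  rw [haux]

lemma hSl' (hS_l : cd ∘ₗ map S LinearMap.id ∘ₗ delta k H = Algebra.linearMap k H ∘ₗ eps k H)
    (a : H) : cd (map S LinearMap.id (delta k H a)) = eps k H a • (1 : H) := by
  have := LinearMap.congr_fun hS_l a
  simpa [Algebra.algebraMap_eq_smul_one] using this

lemma hSr' (hS_r : cd ∘ₗ map LinearMap.id S ∘ₗ delta k H = Algebra.linearMap k H ∘ₗ eps k H)
    (a : H) : cd (map LinearMap.id S (delta k H a)) = eps k H a • (1 : H) := by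
  have := LinearMap.congr_fun hS_r a
  simpa [Algebra.algebraMap_eq_smul_one] using this

lemma S_one (hS_l : cd ∘ₗ map S LinearMap.id ∘ₗ delta k H = Algebra.linearMap k H ∘ₗ eps k H)
    (hone_r : ∀ a : H, cd (a ⊗ₜ[k] (1 : H)) = a) : S 1 = 1 := by
  have h := hSl' cd S hS_l 1
  rw [delta] at h
  rw [Bialgebra.comul_one, Algebra.TensorProduct.one_def] at h
  simpa [eps, hone_r (S 1)] using h

lemma hbc_map
    (hbc : ∀ (a b c : H) (ι : Type) (s : Finset ι) (a1 a2 a3 : ι → H),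
      delta3 k H a = ∑ i ∈ s, (a1 i ⊗ₜ[k] a2 i) ⊗ₜ[k] a3 i →
      a * cd (b ⊗ₜ[k] c)
        = ∑ i ∈ s, cd (cd ((a1 i * b) ⊗ₜ[k] S (a2 i)) ⊗ₜ[k] (a3 i * c)))
    (x u v : H) :
    x * cd (u ⊗ₜ[k] v)
      = PsiG cd S (LinearMap.mulRight k u) (LinearMap.mulRight k v) (delta3 k H x) := by
  obtain ⟨n, xs, ys, zs, h⟩ := exists_fin3 (delta3 k H x)
  rw [hbc x u v (Fin n) Finset.univ xs ys zs h, h, map_sum]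
  simp

/-- `∑ ε(a₂)•a₁ = a` -/
lemma sum_eps_right {a : H} (r : Coalgebra.Repr k a (H × H)) :
    ∑ i ∈ r.index, eps k H (r.right i) • r.left i = a := by
  have h := Coalgebra.sum_tmul_counit_eq (R := k) r
  have h2 := congrArg (TensorProduct.rid k H) h
  rw [map_sum] at h2
  simp only [TensorProduct.rid_tmul] at h2
  simpa [eps] using h2

/-- `∑ ε(a₁)•a₂ = a` -/
lemma sum_eps_left {a : H} (r : Coalgebra.Repr k a (H × H)) :
    ∑ i ∈ r.index, eps k H (r.left i) • r.right i = a := by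
  have h := Coalgebra.sum_counit_tmul_eq (R := k) r
  have h2 := congrArg (TensorProduct.lid k H) h
  rw [map_sum] at h2
  simp only [TensorProduct.lid_tmul] at h2
  simpa [eps] using h2

lemma mulC (s t : H ⊗[k] H) :
    map (mu k H) (mu k H) (ttcMap k H (s ⊗ₜ[k] t)) = s * t := by
  induction s using TensorProduct.induction_on with
  | zero => simp
  | add p q hp hq => simp [add_tmul, add_mul, hp, hq]
  | tmul a b =>
    induction t using TensorProduct.induction_on with
    | zero => simp
    | add p q hp hq => simp [tmul_add, mul_add, hp, hq]
    | tmul x y =>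
      simp [ttcMap, mu, LinearMap.mul'_apply, Algebra.TensorProduct.tmul_mul_tmul]

lemma mulRight_mul (v c : H) :
    LinearMap.mulRight k (v * c) = LinearMap.mulRight k c ∘ₗ LinearMap.mulRight k v := by
  ext x; simp [mul_assoc]

lemma mulRight_one : LinearMap.mulRight k (1 : H) = LinearMap.id := by
  ext x; simp

end Part4

section Part5
variable {k : Type*} [Field k]

lemma nat_ttc {M N P Q M' N' P' Q' : Type*}
    [AddCommMonoid M] [AddCommMonoid N] [AddCommMonoid P] [AddCommMonoid Q]
    [AddCommMonoid M'] [AddCommMonoid N'] [AddCommMonoid P'] [AddCommMonoid Q']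
    [Module k M] [Module k N] [Module k P] [Module k Q]
    [Module k M'] [Module k N'] [Module k P'] [Module k Q']
    (f : M →ₗ[k] M') (g : N →ₗ[k] N') (p : P →ₗ[k] P') (q : Q →ₗ[k] Q') :
    (TensorProduct.tensorTensorTensorComm k M' N' P' Q').toLinearMap ∘ₗ
        map (map f g) (map p q)
      = map (map f p) (map g q) ∘ₗ
        (TensorProduct.tensorTensorTensorComm k M N P Q).toLinearMap := by
  apply TensorProduct.ext_fourfold'; intro x y z w; simp

variable {H : Type*} [Ring H] [Bialgebra k H]

lemma SH :
    (TensorProduct.assoc k (H ⊗[k] H) (H ⊗[k] H) (H ⊗[k] H)).toLinearMap ∘ₗ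
      map (ttcMap k H) LinearMap.id ∘ₗ
      (TensorProduct.tensorTensorTensorComm k (H ⊗[k] H) H (H ⊗[k] H) H).toLinearMap
    = map LinearMap.id (ttcMap k H) ∘ₗ
      (TensorProduct.tensorTensorTensorComm k H (H ⊗[k] H) H (H ⊗[k] H)).toLinearMap ∘ₗ
      map (TensorProduct.assoc k H H H).toLinearMap (TensorProduct.assoc k H H H).toLinearMap := by
  apply ext6; intro x y z u v w; simp [ttcMap]

lemma dd_coassoc :
    (TensorProduct.assoc k (H ⊗[k] H) (H ⊗[k] H) (H ⊗[k] H)).toLinearMap ∘ₗ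
      map (dd k H) LinearMap.id ∘ₗ dd k H
    = map LinearMap.id (dd k H) ∘ₗ dd k H := by
  have e1 : map (dd k H) (LinearMap.id : H ⊗[k] H →ₗ[k] H ⊗[k] H)
      = map (ttcMap k H) LinearMap.id ∘ₗ map (map (delta k H) (delta k H)) LinearMap.id := by
    rw [dd, ← TensorProduct.map_comp]; simp
  have e2 : map (LinearMap.id : H ⊗[k] H →ₗ[k] H ⊗[k] H) (dd k H)
      = map LinearMap.id (ttcMap k H) ∘ₗ map LinearMap.id (map (delta k H) (delta k H)) := by
    rw [dd, ← TensorProduct.map_comp]; simp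
  have n1 : map (map (delta k H) (delta k H)) (LinearMap.id : H ⊗[k] H →ₗ[k] H ⊗[k] H)
        ∘ₗ ttcMap k H
      = (TensorProduct.tensorTensorTensorComm k (H ⊗[k] H) H (H ⊗[k] H) H).toLinearMap ∘ₗ
        map (map (delta k H) LinearMap.id) (map (delta k H) LinearMap.id) := by
    have h := nat_ttc (k := k) (delta k H) (LinearMap.id : H →ₗ[k] H) (delta k H)
      (LinearMap.id : H →ₗ[k] H)
    simp only [TensorProduct.map_id] at h
    rw [ttcMap, ← h]
  have n2 : map (LinearMap.id : H ⊗[k] H →ₗ[k] H ⊗[k] H) (map (delta k H) (delta k H))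
        ∘ₗ ttcMap k H
      = (TensorProduct.tensorTensorTensorComm k H (H ⊗[k] H) H (H ⊗[k] H)).toLinearMap ∘ₗ
        map (map LinearMap.id (delta k H)) (map LinearMap.id (delta k H)) := by
    have h := nat_ttc (k := k) (LinearMap.id : H →ₗ[k] H) (delta k H)
      (LinearMap.id : H →ₗ[k] H) (delta k H)
    simp only [TensorProduct.map_id] at h
    rw [ttcMap, ← h]
  have coassoc2 : map (map LinearMap.id (delta k H)) (map LinearMap.id (delta k H)) ∘ₗ
        map (delta k H) (delta k H)
      = map (TensorProduct.assoc k H H H).toLinearMap (TensorProduct.assoc k H H H).toLinearMap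
          ∘ₗ map (map (delta k H) LinearMap.id) (map (delta k H) LinearMap.id) ∘ₗ
          map (delta k H) (delta k H) := by
    rw [← TensorProduct.map_comp, ← coassoc_map k H]
    rw [← TensorProduct.map_comp, ← TensorProduct.map_comp]
  calc (TensorProduct.assoc k (H ⊗[k] H) (H ⊗[k] H) (H ⊗[k] H)).toLinearMap ∘ₗ
      map (dd k H) LinearMap.id ∘ₗ dd k H
      = (TensorProduct.assoc k (H ⊗[k] H) (H ⊗[k] H) (H ⊗[k] H)).toLinearMap ∘ₗ
        map (ttcMap k H) LinearMap.id ∘ₗ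
        (map (map (delta k H) (delta k H)) LinearMap.id ∘ₗ ttcMap k H) ∘ₗ
        map (delta k H) (delta k H) := by
        rw [e1, dd]; simp [LinearMap.comp_assoc]
    _ = ((TensorProduct.assoc k (H ⊗[k] H) (H ⊗[k] H) (H ⊗[k] H)).toLinearMap ∘ₗ
        map (ttcMap k H) LinearMap.id ∘ₗ
        (TensorProduct.tensorTensorTensorComm k (H ⊗[k] H) H (H ⊗[k] H) H).toLinearMap) ∘ₗ
        map (map (delta k H) LinearMap.id) (map (delta k H) LinearMap.id) ∘ₗ
        map (delta k H) (delta k H) := by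
        rw [n1]; simp [LinearMap.comp_assoc]
    _ = (map LinearMap.id (ttcMap k H) ∘ₗ
        (TensorProduct.tensorTensorTensorComm k H (H ⊗[k] H) H (H ⊗[k] H)).toLinearMap) ∘ₗ
        (map (TensorProduct.assoc k H H H).toLinearMap (TensorProduct.assoc k H H H).toLinearMap ∘ₗ
        map (map (delta k H) LinearMap.id) (map (delta k H) LinearMap.id) ∘ₗ
        map (delta k H) (delta k H)) := by
        rw [SH]; simp [LinearMap.comp_assoc]
    _ = (map LinearMap.id (ttcMap k H) ∘ₗ
        (TensorProduct.tensorTensorTensorComm k H (H ⊗[k] H) H (H ⊗[k] H)).toLinearMap) ∘ₗ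
        map (map LinearMap.id (delta k H)) (map LinearMap.id (delta k H)) ∘ₗ
        map (delta k H) (delta k H) := by rw [← coassoc2]
    _ = map LinearMap.id (ttcMap k H) ∘ₗ
        (map LinearMap.id (map (delta k H) (delta k H)) ∘ₗ ttcMap k H) ∘ₗ
        map (delta k H) (delta k H) := by rw [n2]; simp [LinearMap.comp_assoc]
    _ = map LinearMap.id (dd k H) ∘ₗ dd k H := by
        rw [e2, dd]; simp [LinearMap.comp_assoc]

end Part5

section Part6
variable {k H : Type*} [Field k] [Ring H] [Bialgebra k H]
variable (cd : H ⊗[k] H →ₗ[k] H) (S : H →ₗ[k] H)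

lemma conv_assoc
    (hassoc : ∀ a b c : H, cd (cd (a ⊗ₜ[k] b) ⊗ₜ[k] c) = cd (a ⊗ₜ[k] cd (b ⊗ₜ[k] c)))
    (f g h : H ⊗[k] H →ₗ[k] H) :
    convC cd (convC cd f g) h = convC cd f (convC cd g h) := by
  have step1 : map (cd ∘ₗ map f g ∘ₗ dd k H) h
      = map cd LinearMap.id ∘ₗ map (map f g) h ∘ₗ map (dd k H) LinearMap.id := by
    rw [← TensorProduct.map_comp, ← TensorProduct.map_comp]; simp
  have step5 : map f (cd ∘ₗ map g h ∘ₗ dd k H)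
      = map LinearMap.id cd ∘ₗ map f (map g h) ∘ₗ map LinearMap.id (dd k H) := by
    rw [← TensorProduct.map_comp, ← TensorProduct.map_comp]; simp
  have step3 := TensorProduct.map_map_comp_assoc_eq (R := k) f g h
  -- step3 : map f (map g h) ∘ₗ assoc = assoc ∘ₗ map (map f g) h
  calc convC cd (convC cd f g) h
      = (cd ∘ₗ map cd LinearMap.id) ∘ₗ map (map f g) h ∘ₗ
          map (dd k H) LinearMap.id ∘ₗ dd k H := by
        rw [convC, convC, step1]; simp [LinearMap.comp_assoc]
    _ = cd ∘ₗ map LinearMap.id cd ∘ₗ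
          ((TensorProduct.assoc k H H H).toLinearMap ∘ₗ
            map (map f g) h) ∘ₗ map (dd k H) LinearMap.id ∘ₗ dd k H := by
        rw [cdassoc_map cd hassoc]; simp [LinearMap.comp_assoc]
    _ = cd ∘ₗ map LinearMap.id cd ∘ₗ map f (map g h) ∘ₗ
          ((TensorProduct.assoc k (H ⊗[k] H) (H ⊗[k] H) (H ⊗[k] H)).toLinearMap ∘ₗ
            map (dd k H) LinearMap.id ∘ₗ dd k H) := by
        rw [← step3]; simp [LinearMap.comp_assoc]
    _ = cd ∘ₗ map LinearMap.id cd ∘ₗ map f (map g h) ∘ₗ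
          map LinearMap.id (dd k H) ∘ₗ dd k H := by rw [dd_coassoc]
    _ = convC cd f (convC cd g h) := by
        rw [convC, convC, step5]; simp [LinearMap.comp_assoc]

lemma dd_apply_repr {a b : H} (r : Coalgebra.Repr k a (H × H)) (q : Coalgebra.Repr k b (H × H)) :
    dd k H (a ⊗ₜ[k] b) = ∑ i ∈ r.index, ∑ j ∈ q.index,
      (r.left i ⊗ₜ[k] q.left j) ⊗ₜ[k] (r.right i ⊗ₜ[k] q.right j) := by
  have ha : delta k H a = ∑ i ∈ r.index, r.left i ⊗ₜ[k] r.right i := r.eq.symm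
  have hb : delta k H b = ∑ j ∈ q.index, q.left j ⊗ₜ[k] q.right j := q.eq.symm
  rw [dd_apply, ha, hb, sum_tmul]
  rw [map_sum]
  refine Finset.sum_congr rfl fun i _ => ?_
  rw [tmul_sum, map_sum]
  refine Finset.sum_congr rfl fun j _ => ?_
  simp [ttcMap]

lemma conv_unit_right (hone_r : ∀ a : H, cd (a ⊗ₜ[k] (1 : H)) = a)
    (f : H ⊗[k] H →ₗ[k] H) : convC cd f uC = f := by
  apply TensorProduct.ext'; intro a b
  set r := Coalgebra.Repr.arbitrary k a
  set q := Coalgebra.Repr.arbitrary k b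
  have expand : convC cd f uC (a ⊗ₜ[k] b)
      = ∑ i ∈ r.index, ∑ j ∈ q.index,
          (eps k H (r.right i) * eps k H (q.right j)) • f (r.left i ⊗ₜ[k] q.left j) := by
    rw [convC]
    simp only [LinearMap.coe_comp, Function.comp_apply]
    rw [dd_apply_repr r q, map_sum, map_sum]
    refine Finset.sum_congr rfl fun i _ => ?_
    rw [map_sum, map_sum]
    refine Finset.sum_congr rfl fun j _ => ?_
    simp [tmul_smul, hone_r]
  rw [expand]
  have collapse : f (a ⊗ₜ[k] b)
      = f ((∑ i ∈ r.index, eps k H (r.right i) • r.left i) ⊗ₜ[k]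
           (∑ j ∈ q.index, eps k H (q.right j) • q.left j)) := by
    rw [sum_eps_right r, sum_eps_right q]
  rw [collapse, sum_tmul, map_sum]
  refine Finset.sum_congr rfl fun i _ => ?_
  rw [tmul_sum, map_sum]
  refine Finset.sum_congr rfl fun j _ => ?_
  simp only [tmul_smul, ← smul_tmul', map_smul, smul_smul, mul_comm]

lemma conv_unit_left (hone_l : ∀ a : H, cd ((1 : H) ⊗ₜ[k] a) = a)
    (f : H ⊗[k] H →ₗ[k] H) : convC cd uC f = f := by
  apply TensorProduct.ext'; intro a b
  set r := Coalgebra.Repr.arbitrary k a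
  set q := Coalgebra.Repr.arbitrary k b
  have expand : convC cd uC f (a ⊗ₜ[k] b)
      = ∑ i ∈ r.index, ∑ j ∈ q.index,
          (eps k H (r.left i) * eps k H (q.left j)) • f (r.right i ⊗ₜ[k] q.right j) := by
    rw [convC]
    simp only [LinearMap.coe_comp, Function.comp_apply]
    rw [dd_apply_repr r q, map_sum, map_sum]
    refine Finset.sum_congr rfl fun i _ => ?_
    rw [map_sum, map_sum]
    refine Finset.sum_congr rfl fun j _ => ?_
    have : cd ((((eps k H (r.left i) * eps k H (q.left j))) • (1:H)) ⊗ₜ[k]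
        f (r.right i ⊗ₜ[k] q.right j))
        = (eps k H (r.left i) * eps k H (q.left j)) • f (r.right i ⊗ₜ[k] q.right j) := by
      rw [← smul_tmul', map_smul, hone_l]
    simpa using this
  rw [expand]
  have collapse : f (a ⊗ₜ[k] b)
      = f ((∑ i ∈ r.index, eps k H (r.left i) • r.right i) ⊗ₜ[k]
           (∑ j ∈ q.index, eps k H (q.left j) • q.right j)) := by
    rw [sum_eps_left r, sum_eps_left q]
  rw [collapse, sum_tmul, map_sum]
  refine Finset.sum_congr rfl fun i _ => ?_
  rw [tmul_sum, map_sum]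
  refine Finset.sum_congr rfl fun j _ => ?_
  simp only [tmul_smul, ← smul_tmul', map_smul, smul_smul, mul_comm]

end Part6

section Part7
variable {k H : Type*} [Field k] [Ring H] [Bialgebra k H]
variable (cd : H ⊗[k] H →ₗ[k] H) (S : H →ₗ[k] H)

lemma delta_eq (x : H) : delta k H x = Coalgebra.comul (R := k) x := rfl

lemma C2 (hS_l : cd ∘ₗ map S LinearMap.id ∘ₗ delta k H = Algebra.linearMap k H ∘ₗ eps k H) :
    convC cd (S ∘ₗ mu k H) (mu k H) = uC := by
  apply TensorProduct.ext'; intro a b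
  have hm : map (S ∘ₗ mu k H) (mu k H)
      = map S LinearMap.id ∘ₗ map (mu k H) (mu k H) := by
    rw [← TensorProduct.map_comp]; simp
  have hab : delta k H (a * b) = delta k H a * delta k H b := by
    rw [delta_eq, delta_eq, delta_eq, Bialgebra.comul_mul]
  calc convC cd (S ∘ₗ mu k H) (mu k H) (a ⊗ₜ[k] b)
      = cd (map S LinearMap.id (map (mu k H) (mu k H)
          (ttcMap k H (delta k H a ⊗ₜ[k] delta k H b)))) := by
        rw [convC]
        simp only [LinearMap.coe_comp, Function.comp_apply, dd_apply, hm]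
    _ = cd (map S LinearMap.id (delta k H (a * b))) := by rw [mulC, hab]
    _ = eps k H (a * b) • 1 := hSl' cd S hS_l _
    _ = uC (a ⊗ₜ[k] b) := by
        rw [uC_apply]
        congr 1
        exact Bialgebra.counit_mul a b

lemma map_idS_repr {b : H} (q : Coalgebra.Repr k b (H × H)) :
    map LinearMap.id S (delta k H b) = ∑ j ∈ q.index, q.left j ⊗ₜ[k] S (q.right j) := by
  rw [show delta k H b = ∑ j ∈ q.index, q.left j ⊗ₜ[k] q.right j from q.eq.symm, map_sum]
  simp

lemma sum_cd_idS {b : H} (q : Coalgebra.Repr k b (H × H))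
    (hS_r : cd ∘ₗ map LinearMap.id S ∘ₗ delta k H = Algebra.linearMap k H ∘ₗ eps k H) :
    ∑ j ∈ q.index, cd (q.left j ⊗ₜ[k] S (q.right j)) = eps k H b • 1 := by
  calc ∑ j ∈ q.index, cd (q.left j ⊗ₜ[k] S (q.right j))
      = cd (∑ j ∈ q.index, q.left j ⊗ₜ[k] S (q.right j)) := (map_sum cd _ _).symm
    _ = cd (map LinearMap.id S (delta k H b)) := by rw [map_idS_repr]
    _ = eps k H b • 1 := hSr' cd S hS_r b

lemma C1
    (hassoc : ∀ a b c : H, cd (cd (a ⊗ₜ[k] b) ⊗ₜ[k] c) = cd (a ⊗ₜ[k] cd (b ⊗ₜ[k] c)))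
    (hS_r : cd ∘ₗ map LinearMap.id S ∘ₗ delta k H = Algebra.linearMap k H ∘ₗ eps k H)
    (hbc : ∀ (a b c : H) (ι : Type) (s : Finset ι) (a1 a2 a3 : ι → H),
      delta3 k H a = ∑ i ∈ s, (a1 i ⊗ₜ[k] a2 i) ⊗ₜ[k] a3 i →
      a * cd (b ⊗ₜ[k] c)
        = ∑ i ∈ s, cd (cd ((a1 i * b) ⊗ₜ[k] S (a2 i)) ⊗ₜ[k] (a3 i * c))) :
    convC cd (mu k H) (Tm cd S) = uC := by
  apply TensorProduct.ext'; intro a b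
  set r := Coalgebra.Repr.arbitrary k a with hr
  set q := Coalgebra.Repr.arbitrary k b with hq
  have step1 : convC cd (mu k H) (Tm cd S) (a ⊗ₜ[k] b)
      = ∑ j ∈ q.index, ∑ i ∈ r.index,
          cd ((r.left i * q.left j) ⊗ₜ[k] Tm cd S (r.right i ⊗ₜ[k] q.right j)) := by
    rw [convC]
    simp only [LinearMap.coe_comp, Function.comp_apply]
    rw [dd_apply_repr r q]
    simp only [map_sum]
    rw [Finset.sum_comm]
    refine Finset.sum_congr rfl fun j _ => ?_
    refine Finset.sum_congr rfl fun i _ => ?_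
    simp [mu, LinearMap.mul'_apply]
  have inner : ∀ u v : H, (∑ i ∈ r.index,
        cd ((r.left i * u) ⊗ₜ[k] Tm cd S (r.right i ⊗ₜ[k] v)))
      = ∑ i ∈ r.index, cd ((r.left i * cd (u ⊗ₜ[k] S v)) ⊗ₜ[k] S (r.right i)) := by
    intro u v
    have hK : (cd ∘ₗ map (LinearMap.mulRight k u)
          (Tm cd S ∘ₗ (TensorProduct.mk k H H).flip v) ∘ₗ delta k H)
        = G4' cd S (LinearMap.mulRight k u) (LinearMap.mulRight k (S v)) ∘ₗ
            rho1 k H ∘ₗ map (delta3 k H) LinearMap.id ∘ₗ delta k H := by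
      rw [Tm_flip]
      have split : map (LinearMap.mulRight k u)
            ((Xi cd S ∘ₗ (TensorProduct.mk k ((H ⊗[k] H) ⊗[k] H) H).flip v) ∘ₗ delta3 k H)
          = map (LinearMap.mulRight k u)
              (Xi cd S ∘ₗ (TensorProduct.mk k ((H ⊗[k] H) ⊗[k] H) H).flip v) ∘ₗ
            map LinearMap.id (delta3 k H) := by
        rw [← TensorProduct.map_comp]; simp
      rw [split]
      simp only [← LinearMap.comp_assoc]
      rw [lemK1 cd S hassoc]
      simp only [LinearMap.comp_assoc]
      rw [← E3, E2]
    have lhs_eq : (∑ i ∈ r.index,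
          cd ((r.left i * u) ⊗ₜ[k] Tm cd S (r.right i ⊗ₜ[k] v)))
        = (cd ∘ₗ map (LinearMap.mulRight k u)
            (Tm cd S ∘ₗ (TensorProduct.mk k H H).flip v) ∘ₗ delta k H) a := by
      simp only [LinearMap.coe_comp, Function.comp_apply]
      rw [show delta k H a = ∑ i ∈ r.index, r.left i ⊗ₜ[k] r.right i from r.eq.symm]
      rw [map_sum, map_sum]
      simp
    rw [lhs_eq, hK]
    simp only [LinearMap.coe_comp, Function.comp_apply]
    rw [show delta k H a = ∑ i ∈ r.index, r.left i ⊗ₜ[k] r.right i from r.eq.symm]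
    rw [map_sum, map_sum, map_sum]
    refine Finset.sum_congr rfl fun i _ => ?_
    obtain ⟨n, xs, ys, zs, h3⟩ := exists_fin3 (delta3 k H (r.left i))
    rw [map_tmul, LinearMap.id_apply, h3, sum_tmul, map_sum, map_sum]
    have hPsi : r.left i * cd (u ⊗ₜ[k] S v)
        = ∑ m : Fin n, cd (cd ((xs m * u) ⊗ₜ[k] S (ys m)) ⊗ₜ[k] (zs m * S v)) := by
      rw [hbc_map cd S hbc (r.left i) u (S v), h3, map_sum]
      simp
    rw [hPsi, sum_tmul, map_sum]
    refine Finset.sum_congr rfl fun m _ => ?_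
    simp
  rw [step1]
  calc (∑ j ∈ q.index, ∑ i ∈ r.index,
        cd ((r.left i * q.left j) ⊗ₜ[k] Tm cd S (r.right i ⊗ₜ[k] q.right j)))
      = ∑ j ∈ q.index, ∑ i ∈ r.index,
          cd ((r.left i * cd (q.left j ⊗ₜ[k] S (q.right j))) ⊗ₜ[k] S (r.right i)) :=
        Finset.sum_congr rfl fun j _ => inner (q.left j) (q.right j)
    _ = ∑ i ∈ r.index, ∑ j ∈ q.index,
          cd ((r.left i * cd (q.left j ⊗ₜ[k] S (q.right j))) ⊗ₜ[k] S (r.right i)) :=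
        Finset.sum_comm
    _ = ∑ i ∈ r.index, cd ((r.left i * (eps k H b • 1)) ⊗ₜ[k] S (r.right i)) := by
        refine Finset.sum_congr rfl fun i _ => ?_
        rw [← sum_cd_idS cd S q hS_r, Finset.mul_sum, sum_tmul, map_sum]
    _ = ∑ i ∈ r.index, eps k H b • cd (r.left i ⊗ₜ[k] S (r.right i)) := by
        refine Finset.sum_congr rfl fun i _ => ?_
        rw [mul_smul_comm, mul_one, ← smul_tmul', map_smul]
    _ = eps k H b • ∑ i ∈ r.index, cd (r.left i ⊗ₜ[k] S (r.right i)) :=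
        (Finset.smul_sum).symm
    _ = eps k H b • (eps k H a • (1 : H)) := by rw [sum_cd_idS cd S r hS_r]
    _ = uC (a ⊗ₜ[k] b) := by rw [uC_apply, smul_smul, mul_comm]

lemma PmTm
    (hassoc : ∀ a b c : H, cd (cd (a ⊗ₜ[k] b) ⊗ₜ[k] c) = cd (a ⊗ₜ[k] cd (b ⊗ₜ[k] c)))
    (hone_l : ∀ a : H, cd ((1 : H) ⊗ₜ[k] a) = a)
    (hone_r : ∀ a : H, cd (a ⊗ₜ[k] (1 : H)) = a)
    (hS_l : cd ∘ₗ map S LinearMap.id ∘ₗ delta k H = Algebra.linearMap k H ∘ₗ eps k H)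
    (hS_r : cd ∘ₗ map LinearMap.id S ∘ₗ delta k H = Algebra.linearMap k H ∘ₗ eps k H)
    (hbc : ∀ (a b c : H) (ι : Type) (s : Finset ι) (a1 a2 a3 : ι → H),
      delta3 k H a = ∑ i ∈ s, (a1 i ⊗ₜ[k] a2 i) ⊗ₜ[k] a3 i →
      a * cd (b ⊗ₜ[k] c)
        = ∑ i ∈ s, cd (cd ((a1 i * b) ⊗ₜ[k] S (a2 i)) ⊗ₜ[k] (a3 i * c))) :
    S ∘ₗ mu k H = Tm cd S := by
  calc S ∘ₗ mu k H
      = convC cd (S ∘ₗ mu k H) uC := (conv_unit_right cd hone_r _).symm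
    _ = convC cd (S ∘ₗ mu k H) (convC cd (mu k H) (Tm cd S)) := by
        rw [C1 cd S hassoc hS_r hbc]
    _ = convC cd (convC cd (S ∘ₗ mu k H) (mu k H)) (Tm cd S) :=
        (conv_assoc cd hassoc _ _ _).symm
    _ = convC cd uC (Tm cd S) := by rw [C2 cd S hS_l]
    _ = Tm cd S := conv_unit_left cd hone_l _

end Part7

section Part8
variable {k H : Type*} [Field k] [Ring H] [Bialgebra k H]
variable (cd : H ⊗[k] H →ₗ[k] H) (S : H →ₗ[k] H)

lemma stmt1
    (hone_l : ∀ a : H, cd ((1 : H) ⊗ₜ[k] a) = a)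
    (hone_r : ∀ a : H, cd (a ⊗ₜ[k] (1 : H)) = a)
    (hS_l : cd ∘ₗ map S LinearMap.id ∘ₗ delta k H = Algebra.linearMap k H ∘ₗ eps k H)
    (b : H) :
    (cd ∘ₗ map S (mu k H) ∘ₗ assocMap k H ∘ₗ map (delta k H) LinearMap.id)
      ((1 : H) ⊗ₜ[k] b) = b := by
  rw [Fapp]
  have h1 : delta k H (1 : H) = (1 : H) ⊗ₜ[k] (1 : H) := by
    rw [delta_eq, Bialgebra.comul_one, Algebra.TensorProduct.one_def]
  rw [h1]
  simp [S_one cd S hS_l hone_r, hone_l]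

lemma stmt4
    (hS_l : cd ∘ₗ map S LinearMap.id ∘ₗ delta k H = Algebra.linearMap k H ∘ₗ eps k H)
    (a : H) :
    (cd ∘ₗ map S (mu k H) ∘ₗ assocMap k H ∘ₗ map (delta k H) LinearMap.id)
      (a ⊗ₜ[k] (1 : H)) = eps k H a • (1 : H) := by
  rw [Fapp, mulRight_one]
  exact hSl' cd S hS_l a

lemma key3
    (hassoc : ∀ a b c : H, cd (cd (a ⊗ₜ[k] b) ⊗ₜ[k] c) = cd (a ⊗ₜ[k] cd (b ⊗ₜ[k] c)))
    (f2 f4 : H →ₗ[k] H) :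
    cd ∘ₗ map S (PsiG cd S f2 f4) ∘ₗ map LinearMap.id (delta3 k H) ∘ₗ delta k H
      = cd ∘ₗ map (cd ∘ₗ map S f2 ∘ₗ delta k H) (cd ∘ₗ map S f4 ∘ₗ delta k H)
          ∘ₗ delta k H := by
  have lhs : cd ∘ₗ map S (PsiG cd S f2 f4) ∘ₗ map LinearMap.id (delta3 k H) ∘ₗ delta k H
      = G4 cd S f2 f4 ∘ₗ Emap k H := by
    simp only [← LinearMap.comp_assoc]
    rw [lemL cd S hassoc]
    simp only [LinearMap.comp_assoc]
    rw [← E3]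
  have rhs : cd ∘ₗ map (cd ∘ₗ map S f2 ∘ₗ delta k H) (cd ∘ₗ map S f4 ∘ₗ delta k H)
        ∘ₗ delta k H
      = G4 cd S f2 f4 ∘ₗ Emap k H := by
    have split : map (cd ∘ₗ map S f2 ∘ₗ delta k H) (cd ∘ₗ map S f4 ∘ₗ delta k H)
        = map (cd ∘ₗ map S f2) (cd ∘ₗ map S f4) ∘ₗ map (delta k H) (delta k H) := by
      rw [← TensorProduct.map_comp]
      simp only [LinearMap.comp_assoc]
    rw [split]
    simp only [← LinearMap.comp_assoc]
    rw [lemR3 cd S hassoc]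
    simp only [LinearMap.comp_assoc]
    rw [Emap]
  rw [lhs, rhs]

lemma key2
    (hassoc : ∀ a b c : H, cd (cd (a ⊗ₜ[k] b) ⊗ₜ[k] c) = cd (a ⊗ₜ[k] cd (b ⊗ₜ[k] c)))
    (u : H) (f4 : H →ₗ[k] H) :
    cd ∘ₗ map (Tm cd S ∘ₗ (TensorProduct.mk k H H).flip u) f4 ∘ₗ delta k H
      = cd ∘ₗ map S (PsiG cd S (LinearMap.mulRight k (S u)) f4 ∘ₗ delta3 k H)
          ∘ₗ delta k H := by
  have split2 : map S (PsiG cd S (LinearMap.mulRight k (S u)) f4 ∘ₗ delta3 k H)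
      = map S (PsiG cd S (LinearMap.mulRight k (S u)) f4) ∘ₗ
          map LinearMap.id (delta3 k H) := by
    rw [← TensorProduct.map_comp]; simp
  have split1 : map (Tm cd S ∘ₗ (TensorProduct.mk k H H).flip u) f4
      = map (Xi cd S ∘ₗ (TensorProduct.mk k ((H ⊗[k] H) ⊗[k] H) H).flip u) f4 ∘ₗ
          map (delta3 k H) LinearMap.id := by
    rw [Tm_flip, ← TensorProduct.map_comp]; simp
  rw [split1, split2]
  simp only [← LinearMap.comp_assoc]
  rw [lemR2 cd S u f4, lemL cd S hassoc]
  simp only [LinearMap.comp_assoc]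
  rw [← E2, E3]

lemma stmt3
    (hassoc : ∀ a b c : H, cd (cd (a ⊗ₜ[k] b) ⊗ₜ[k] c) = cd (a ⊗ₜ[k] cd (b ⊗ₜ[k] c)))
    (hbc : ∀ (a b c : H) (ι : Type) (s : Finset ι) (a1 a2 a3 : ι → H),
      delta3 k H a = ∑ i ∈ s, (a1 i ⊗ₜ[k] a2 i) ⊗ₜ[k] a3 i →
      a * cd (b ⊗ₜ[k] c)
        = ∑ i ∈ s, cd (cd ((a1 i * b) ⊗ₜ[k] S (a2 i)) ⊗ₜ[k] (a3 i * c))) :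
    ((cd ∘ₗ map S (mu k H) ∘ₗ assocMap k H ∘ₗ map (delta k H) LinearMap.id) ∘ₗ
        map LinearMap.id cd
      : H ⊗[k] (H ⊗[k] H) →ₗ[k] H)
      = cd ∘ₗ
          map (cd ∘ₗ map S (mu k H) ∘ₗ assocMap k H ∘ₗ map (delta k H) LinearMap.id)
              (cd ∘ₗ map S (mu k H) ∘ₗ assocMap k H ∘ₗ map (delta k H) LinearMap.id) ∘ₗ
          ttcMap k H ∘ₗ map (delta k H) LinearMap.id := by
  apply TensorProduct.ext'; intro a t
  induction t using TensorProduct.induction_on with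
  | zero => simp
  | add s t hs ht =>
    simp only [LinearMap.coe_comp, Function.comp_apply] at hs ht ⊢
    simp only [tmul_add, map_add, hs, ht]
  | tmul b c =>
    have hmr : LinearMap.mulRight k (cd (b ⊗ₜ[k] c))
        = PsiG cd S (LinearMap.mulRight k b) (LinearMap.mulRight k c) ∘ₗ delta3 k H := by
      apply LinearMap.ext; intro x
      simpa using hbc_map cd S hbc x b c
    have splitPsi : map S (PsiG cd S (LinearMap.mulRight k b) (LinearMap.mulRight k c)
          ∘ₗ delta3 k H)
        = map S (PsiG cd S (LinearMap.mulRight k b) (LinearMap.mulRight k c)) ∘ₗ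
            map LinearMap.id (delta3 k H) := by
      rw [← TensorProduct.map_comp]; simp
    have lhs_eq : ((cd ∘ₗ map S (mu k H) ∘ₗ assocMap k H ∘ₗ map (delta k H) LinearMap.id) ∘ₗ
          map LinearMap.id cd) (a ⊗ₜ[k] (b ⊗ₜ[k] c))
        = (cd ∘ₗ map S (PsiG cd S (LinearMap.mulRight k b) (LinearMap.mulRight k c)) ∘ₗ
            map LinearMap.id (delta3 k H) ∘ₗ delta k H) a := by
      calc ((cd ∘ₗ map S (mu k H) ∘ₗ assocMap k H ∘ₗ map (delta k H) LinearMap.id) ∘ₗ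
          map LinearMap.id cd) (a ⊗ₜ[k] (b ⊗ₜ[k] c))
          = (cd ∘ₗ map S (mu k H) ∘ₗ assocMap k H ∘ₗ map (delta k H) LinearMap.id)
              (a ⊗ₜ[k] cd (b ⊗ₜ[k] c)) := by
            simp only [LinearMap.coe_comp, Function.comp_apply, map_tmul, LinearMap.id_apply]
        _ = cd (map S (LinearMap.mulRight k (cd (b ⊗ₜ[k] c))) (delta k H a)) := Fapp cd S _ _
        _ = _ := by
            rw [hmr, splitPsi]
            simp only [LinearMap.coe_comp, Function.comp_apply]
    have haux : ∀ t : H ⊗[k] H,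
        map (cd ∘ₗ map S (mu k H) ∘ₗ assocMap k H ∘ₗ map (delta k H) LinearMap.id)
            (cd ∘ₗ map S (mu k H) ∘ₗ assocMap k H ∘ₗ map (delta k H) LinearMap.id)
          (ttcMap k H (t ⊗ₜ[k] (b ⊗ₜ[k] c)))
        = map (cd ∘ₗ map S (LinearMap.mulRight k b) ∘ₗ delta k H)
            (cd ∘ₗ map S (LinearMap.mulRight k c) ∘ₗ delta k H) t := by
      intro t
      induction t using TensorProduct.induction_on with
      | zero => simp
      | add s t hs ht => simp only [add_tmul, map_add, hs, ht]
      | tmul x y =>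
        have h1 : ttcMap k H ((x ⊗ₜ[k] y) ⊗ₜ[k] (b ⊗ₜ[k] c))
            = (x ⊗ₜ[k] b) ⊗ₜ[k] (y ⊗ₜ[k] c) := by simp [ttcMap]
        rw [h1, map_tmul, map_tmul, Fapp, Fapp]
        simp only [LinearMap.coe_comp, Function.comp_apply]
    have rhs_eq : (cd ∘ₗ
          map (cd ∘ₗ map S (mu k H) ∘ₗ assocMap k H ∘ₗ map (delta k H) LinearMap.id)
              (cd ∘ₗ map S (mu k H) ∘ₗ assocMap k H ∘ₗ map (delta k H) LinearMap.id) ∘ₗ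
          ttcMap k H ∘ₗ map (delta k H) LinearMap.id) (a ⊗ₜ[k] (b ⊗ₜ[k] c))
        = (cd ∘ₗ map (cd ∘ₗ map S (LinearMap.mulRight k b) ∘ₗ delta k H)
            (cd ∘ₗ map S (LinearMap.mulRight k c) ∘ₗ delta k H) ∘ₗ delta k H) a := by
      simp only [LinearMap.coe_comp, Function.comp_apply, map_tmul, LinearMap.id_apply]
      rw [haux]
    rw [lhs_eq, rhs_eq, key3 cd S hassoc]

lemma stmt2
    (hassoc : ∀ a b c : H, cd (cd (a ⊗ₜ[k] b) ⊗ₜ[k] c) = cd (a ⊗ₜ[k] cd (b ⊗ₜ[k] c)))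
    (hone_l : ∀ a : H, cd ((1 : H) ⊗ₜ[k] a) = a)
    (hone_r : ∀ a : H, cd (a ⊗ₜ[k] (1 : H)) = a)
    (hS_l : cd ∘ₗ map S LinearMap.id ∘ₗ delta k H = Algebra.linearMap k H ∘ₗ eps k H)
    (hS_r : cd ∘ₗ map LinearMap.id S ∘ₗ delta k H = Algebra.linearMap k H ∘ₗ eps k H)
    (hbc : ∀ (a b c : H) (ι : Type) (s : Finset ι) (a1 a2 a3 : ι → H),
      delta3 k H a = ∑ i ∈ s, (a1 i ⊗ₜ[k] a2 i) ⊗ₜ[k] a3 i →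
      a * cd (b ⊗ₜ[k] c)
        = ∑ i ∈ s, cd (cd ((a1 i * b) ⊗ₜ[k] S (a2 i)) ⊗ₜ[k] (a3 i * c)))
    (a b c : H) :
    (cd ∘ₗ map S (mu k H) ∘ₗ assocMap k H ∘ₗ map (delta k H) LinearMap.id)
        ((a * b) ⊗ₜ[k] c)
      = (cd ∘ₗ map S (mu k H) ∘ₗ assocMap k H ∘ₗ map (delta k H) LinearMap.id)
          (a ⊗ₜ[k]
            (cd ∘ₗ map S (mu k H) ∘ₗ assocMap k H ∘ₗ map (delta k H) LinearMap.id)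
              (b ⊗ₜ[k] c)) := by
  set r := Coalgebra.Repr.arbitrary k a with hr
  set q := Coalgebra.Repr.arbitrary k b with hq
  have hab : delta k H (a * b) = delta k H a * delta k H b := by
    rw [delta_eq, delta_eq, delta_eq, Bialgebra.comul_mul]
  have L1 : (cd ∘ₗ map S (mu k H) ∘ₗ assocMap k H ∘ₗ map (delta k H) LinearMap.id)
        ((a * b) ⊗ₜ[k] c)
      = cd (map (Tm cd S) (LinearMap.mulRight k c ∘ₗ mu k H) (dd k H (a ⊗ₜ[k] b))) := by
    rw [Fapp, hab, ← mulC (delta k H a) (delta k H b)]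
    conv_lhs => rw [← LinearMap.comp_apply, ← LinearMap.comp_apply,
      LinearMap.comp_assoc (map (mu k H) (mu k H)) (map S (LinearMap.mulRight k c)) cd,
      ← TensorProduct.map_comp]
    rw [PmTm cd S hassoc hone_l hone_r hS_l hS_r hbc, dd_apply]
    rfl
  have L2 : cd (map (Tm cd S) (LinearMap.mulRight k c ∘ₗ mu k H) (dd k H (a ⊗ₜ[k] b)))
      = ∑ j ∈ q.index, (cd ∘ₗ
          map (Tm cd S ∘ₗ (TensorProduct.mk k H H).flip (q.left j))
            (LinearMap.mulRight k c ∘ₗ LinearMap.mulRight k (q.right j)) ∘ₗ delta k H) a := by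
    rw [dd_apply_repr r q]
    simp only [map_sum]
    rw [Finset.sum_comm]
    refine Finset.sum_congr rfl fun j _ => ?_
    simp only [LinearMap.coe_comp, Function.comp_apply]
    rw [show delta k H a = ∑ i ∈ r.index, r.left i ⊗ₜ[k] r.right i from r.eq.symm]
    simp only [map_sum]
    refine Finset.sum_congr rfl fun i _ => ?_
    simp [mu, LinearMap.mul'_apply, mul_assoc]
  have R1 : (cd ∘ₗ map S (mu k H) ∘ₗ assocMap k H ∘ₗ map (delta k H) LinearMap.id)
        (b ⊗ₜ[k] c) = ∑ j ∈ q.index, cd (S (q.left j) ⊗ₜ[k] (q.right j * c)) := by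
    rw [Fapp]
    rw [show delta k H b = ∑ j ∈ q.index, q.left j ⊗ₜ[k] q.right j from q.eq.symm]
    simp only [map_sum]
    simp
  have R2 : (cd ∘ₗ map S (mu k H) ∘ₗ assocMap k H ∘ₗ map (delta k H) LinearMap.id)
        (a ⊗ₜ[k]
          (cd ∘ₗ map S (mu k H) ∘ₗ assocMap k H ∘ₗ map (delta k H) LinearMap.id)
            (b ⊗ₜ[k] c))
      = ∑ j ∈ q.index, (cd ∘ₗ
          map S (PsiG cd S (LinearMap.mulRight k (S (q.left j)))
            (LinearMap.mulRight k c ∘ₗ LinearMap.mulRight k (q.right j)) ∘ₗ delta3 k H)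
          ∘ₗ delta k H) a := by
    rw [Fapp, R1]
    rw [show delta k H a = ∑ i ∈ r.index, r.left i ⊗ₜ[k] r.right i from r.eq.symm]
    simp only [map_sum]
    have per_i : ∀ i ∈ r.index,
        cd (map S (LinearMap.mulRight k
            (∑ j ∈ q.index, cd (S (q.left j) ⊗ₜ[k] (q.right j * c))))
          (r.left i ⊗ₜ[k] r.right i))
        = ∑ j ∈ q.index, cd (S (r.left i) ⊗ₜ[k]
            (PsiG cd S (LinearMap.mulRight k (S (q.left j)))
              (LinearMap.mulRight k c ∘ₗ LinearMap.mulRight k (q.right j))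
              (delta3 k H (r.right i)))) := by
      intro i _
      rw [map_tmul, LinearMap.mulRight_apply, Finset.mul_sum, tmul_sum, map_sum]
      refine Finset.sum_congr rfl fun j _ => ?_
      rw [hbc_map cd S hbc (r.right i) (S (q.left j)) (q.right j * c), mulRight_mul]
    rw [Finset.sum_congr rfl per_i, Finset.sum_comm]
    refine Finset.sum_congr rfl fun j _ => ?_
    simp only [LinearMap.coe_comp, Function.comp_apply]
    rw [show delta k H a = ∑ i ∈ r.index, r.left i ⊗ₜ[k] r.right i from r.eq.symm]
    simp only [map_sum]
    refine Finset.sum_congr rfl fun i _ => ?_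
    simp
  rw [L1, L2, R2]
  refine Finset.sum_congr rfl fun j _ => ?_
  exact LinearMap.congr_fun
    (key2 cd S hassoc (q.left j)
      (LinearMap.mulRight k c ∘ₗ LinearMap.mulRight k (q.right j))) a

end Part8
/-- Lemma 3.15, first part: given a bialgebra `(H,•,1,Δ,ε)`, a second
associative unital product `·` (= `cd`) with the same unit, and a linear map `S` with
`S(a₁)·a₂ = ε(a)1 = a₁·S(a₂)`, satisfying the Hopf brace compatibility
`a•(b·c) = (a₁•b)·S(a₂)·(a₃•c)`, the formula `a⇀b := S(a₁)·(a₂•b)` defines a left action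
of `(H,•)` on `H`, and `(H,·,1)` is a left module algebra:
`a⇀(b·c) = (a₁⇀b)·(a₂⇀c)` and `a⇀1 = ε(a)1`. -/
theorem leftaction_module_algebra_of_hopf_brace_compat
    (cd : H ⊗[k] H →ₗ[k] H) (S : H →ₗ[k] H)
    (hassoc : ∀ a b c : H, cd (cd (a ⊗ₜ[k] b) ⊗ₜ[k] c) = cd (a ⊗ₜ[k] cd (b ⊗ₜ[k] c)))
    (hone_l : ∀ a : H, cd ((1 : H) ⊗ₜ[k] a) = a)
    (hone_r : ∀ a : H, cd (a ⊗ₜ[k] (1 : H)) = a)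
    (hS_l : cd ∘ₗ map S LinearMap.id ∘ₗ delta k H = Algebra.linearMap k H ∘ₗ eps k H)
    (hS_r : cd ∘ₗ map LinearMap.id S ∘ₗ delta k H = Algebra.linearMap k H ∘ₗ eps k H)
    (hbc : ∀ (a b c : H) (ι : Type) (s : Finset ι) (a1 a2 a3 : ι → H),
      delta3 k H a = ∑ i ∈ s, (a1 i ⊗ₜ[k] a2 i) ⊗ₜ[k] a3 i →
      a * cd (b ⊗ₜ[k] c)
        = ∑ i ∈ s, cd (cd ((a1 i * b) ⊗ₜ[k] S (a2 i)) ⊗ₜ[k] (a3 i * c))) :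
    (∀ b : H,
      (cd ∘ₗ map S (mu k H) ∘ₗ assocMap k H ∘ₗ map (delta k H) LinearMap.id)
        ((1 : H) ⊗ₜ[k] b) = b) ∧
    (∀ a b c : H,
      (cd ∘ₗ map S (mu k H) ∘ₗ assocMap k H ∘ₗ map (delta k H) LinearMap.id)
          ((a * b) ⊗ₜ[k] c)
        = (cd ∘ₗ map S (mu k H) ∘ₗ assocMap k H ∘ₗ map (delta k H) LinearMap.id)
            (a ⊗ₜ[k]
              (cd ∘ₗ map S (mu k H) ∘ₗ assocMap k H ∘ₗ map (delta k H) LinearMap.id)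
                (b ⊗ₜ[k] c))) ∧
    ((cd ∘ₗ map S (mu k H) ∘ₗ assocMap k H ∘ₗ map (delta k H) LinearMap.id) ∘ₗ
        map LinearMap.id cd
      = cd ∘ₗ
          map (cd ∘ₗ map S (mu k H) ∘ₗ assocMap k H ∘ₗ map (delta k H) LinearMap.id)
              (cd ∘ₗ map S (mu k H) ∘ₗ assocMap k H ∘ₗ map (delta k H) LinearMap.id) ∘ₗ
          ttcMap k H ∘ₗ map (delta k H) LinearMap.id) ∧
    (∀ a : H,
      (cd ∘ₗ map S (mu k H) ∘ₗ assocMap k H ∘ₗ map (delta k H) LinearMap.id)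
        (a ⊗ₜ[k] (1 : H)) = eps k H a • (1 : H)) := by
  exact ⟨stmt1 cd S hone_l hone_r hS_l,
    fun a b c => stmt2 cd S hassoc hone_l hone_r hS_l hS_r hbc a b c,
    stmt3 cd S hassoc hbc,
    stmt4 cd S hS_l⟩

end
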